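/- Let m > 1 and n > 1 be naturals, let F be an LCA over (ℤ/mℤ)^n and let A ∈ 𝕃_m^{n×n} be the matrix associated with F. Then F is NOT positively expansive if and only if there exists an integer s > 0 such that at least one of the following holds: (a) there exists υ ∈ Left(𝕊^n_m, 0) with υ ≠ 0 such that A^ℓ υ ∈ Left*(𝕊^n_m, s) for every natural ℓ > 0; (b) there exists υ ∈ Right(𝕊^n_m, 0) with υ ≠ 0 such that A^ℓ υ ∈ Right*(𝕊^n_m, −s) for every natural ℓ > 0. -/

import Mathlib

open LaurentPolynomial
open scoped Classical

/-- `𝕃 m`: Laurent polynomials over `ℤ/mℤ`. -/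
abbrev Lm (m : ℕ) := LaurentPolynomial (ZMod m)

/-- `deg⁺` of a Laurent polynomial: the max of its support (`⊥ = -∞` for `0`). -/
noncomputable def degP {m : ℕ} (α : Lm m) : WithBot ℤ := α.coeff.support.max

/-- `deg⁻` of a Laurent polynomial: the min of its support (`⊤ = +∞` for `0`). -/
noncomputable def degM {m : ℕ} (α : Lm m) : WithTop ℤ := α.coeff.support.min

/-- A monic polynomial `π(t) = α₀ + α₁ t + ⋯ + α_{n-1} t^{n-1} + tⁿ` over `𝕃 m`
is *expansive* if `α₀ ≠ 0`, `deg⁺(α₀) > 0`, `deg⁺(α₀) > deg⁺(αᵢ)`,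
`deg⁻(α₀) < 0` and `deg⁻(α₀) < deg⁻(αᵢ)` for all `1 ≤ i ≤ n-1`. -/
def ExpansivePoly {m : ℕ} (π : Polynomial (Lm m)) : Prop :=
  π.coeff 0 ≠ 0 ∧
  ((0 : WithBot ℤ) < degP (π.coeff 0) ∧
    ∀ i : ℕ, 1 ≤ i → i < π.natDegree → degP (π.coeff i) < degP (π.coeff 0)) ∧
  (degM (π.coeff 0) < (0 : WithTop ℤ) ∧
    ∀ i : ℕ, 1 ≤ i → i < π.natDegree → degM (π.coeff 0) < degM (π.coeff i))

/-- A matrix over `𝕃 m` is expansive if its characteristic polynomial is. -/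
noncomputable def ExpansiveMatrix {m n : ℕ} (A : Matrix (Fin n) (Fin n) (Lm m)) : Prop :=
  ExpansivePoly A.charpoly

/-- The Tychonoff distance on the configuration space `(ℤ → S)`. -/
noncomputable def tdist {S : Type*} (c c' : ℤ → S) : ℝ :=
  if c = c' then 0
  else (2 : ℝ) ^ (-((sInf {k : ℕ | ∃ j : ℤ, j.natAbs = k ∧ c j ≠ c' j} : ℕ) : ℤ))

/-- A map on the configuration space is positively expansive if for some `ε > 0`
any two distinct configurations are eventually `≥ ε` apart. -/
def PosExpansive {S : Type*} (F : (ℤ → S) → (ℤ → S)) : Prop :=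
  ∃ ε : ℝ, 0 < ε ∧ ∀ c c' : ℤ → S, c ≠ c' →
    ∃ ℓ : ℕ, ε ≤ tdist (F^[ℓ] c) (F^[ℓ] c')

/-- The linear CA over `(ℤ/mℤ)ⁿ` determined by a matrix `A ∈ 𝕃_m^{n×n}`:
`F_A(c)_i = ∑_{k ∈ ℤ} A⁽ᵏ⁾ · c_{i-k}` where `A⁽ᵏ⁾` is the coefficient matrix of `Xᵏ` in `A`.
The same formula gives the action of `A` on two-sided formal power series `𝕊_m^n`. -/
noncomputable def lcaFun {m n : ℕ} (A : Matrix (Fin n) (Fin n) (Lm m)) :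
    (ℤ → Fin n → ZMod m) → (ℤ → Fin n → ZMod m) :=
  fun c i a => ∑ b, Finsupp.sum (A a b).coeff (fun k coef => coef * c (i - k) b)

/-- `Left(𝕊ⁿ_m, s)`: two-sided series with `deg⁺ = s`. -/
def SLeft {V : Type*} [Zero V] (s : ℤ) : Set (ℤ → V) :=
  {υ | (∀ j : ℤ, s < j → υ j = 0) ∧ υ s ≠ 0}

/-- `Left*(𝕊ⁿ_m, s)`: two-sided series with `deg⁺ ≤ s`. -/
def SLeftStar {V : Type*} [Zero V] (s : ℤ) : Set (ℤ → V) :=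
  {υ | ∀ j : ℤ, s < j → υ j = 0}

/-- `Right(𝕊ⁿ_m, s)`: two-sided series with `deg⁻ = s`. -/
def SRight {V : Type*} [Zero V] (s : ℤ) : Set (ℤ → V) :=
  {υ | (∀ j : ℤ, j < s → υ j = 0) ∧ υ s ≠ 0}

/-- `Right*(𝕊ⁿ_m, s)`: two-sided series with `deg⁻ ≥ s`. -/
def SRightStar {V : Type*} [Zero V] (s : ℤ) : Set (ℤ → V) :=
  {υ | ∀ j : ℤ, j < s → υ j = 0}

/-- Reduction of a Laurent polynomial over `ℤ/mℤ` modulo `q` (for `q ∣ m`). -/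
noncomputable def lmod {m q : ℕ} (h : q ∣ m) (α : Lm m) : Lm q :=
  AddMonoidAlgebra.ofCoeff (Finsupp.mapRange (ZMod.castHom h (ZMod q)) (map_zero _) α.coeff)

/-- Entrywise reduction of a matrix of Laurent polynomials modulo `q`. -/
noncomputable def matMod {m q n : ℕ} (h : q ∣ m) (B : Matrix (Fin n) (Fin n) (Lm m)) :
    Matrix (Fin n) (Fin n) (Lm q) :=
  fun a b => lmod h (B a b)

/-- `deg⁺` on the field of fractions of `𝕃 p`: `deg⁺(α/β) = deg⁺(α) - deg⁺(β)`,
computed on a representation given by `IsLocalization.sec`; `deg⁺ 0 = ⊥`. -/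
noncomputable def degPF {p : ℕ} (φ : FractionRing (Lm p)) : WithBot ℤ :=
  if φ = 0 then ⊥
  else (((degP ((IsLocalization.sec (nonZeroDivisors (Lm p)) φ).1)).unbotD 0
        - (degP (((IsLocalization.sec (nonZeroDivisors (Lm p)) φ).2 : Lm p))).unbotD 0 : ℤ) : WithBot ℤ)

/-- The `(x, y)` entry (with `ℕ`-indices) of the companion matrix of a polynomial `π`
viewed as a `d × d` matrix: subdiagonal entries `1`,
last column `(-π.coeff 0, …, -π.coeff (d-1))ᵀ`, the rest `0`. -/
def companionEntry {R : Type*} [CommRing R] (d : ℕ) (π : Polynomial R) (x y : ℕ) : R :=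
  if y = d - 1 then -π.coeff x else if x = y + 1 then 1 else 0

/-- The companion matrix (as a `d × d` matrix) of a polynomial `π`. -/
def companionMatrix {R : Type*} [CommRing R] (d : ℕ) (π : Polynomial R) :
    Matrix (Fin d) (Fin d) R :=
  fun a b => companionEntry d π a b

/-- A matrix is in rational canonical form if it is block diagonal with blocks the
companion matrices of monic polynomials `π₁, …, π_s` of degree at least one with
`πᵢ ∣ πⱼ` for `i ≤ j`.  The blocks are described by the offsets `off i` of their
top-left corners. -/
def IsRCF {R : Type*} [CommRing R] {n : ℕ} (C : Matrix (Fin n) (Fin n) R) : Prop :=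
  ∃ (s : ℕ) (π : Fin s → Polynomial R) (off : Fin (s + 1) → ℕ),
    (∀ i, (π i).Monic) ∧ (∀ i, 1 ≤ (π i).natDegree) ∧
    (∀ i j, i ≤ j → π i ∣ π j) ∧
    off 0 = 0 ∧ off (Fin.last s) = n ∧
    (∀ i : Fin s, off i.succ = off i.castSucc + (π i).natDegree) ∧
    (∀ (i : Fin s) (a b : Fin n),
      off i.castSucc ≤ (a : ℕ) → (a : ℕ) < off i.succ →
      off i.castSucc ≤ (b : ℕ) → (b : ℕ) < off i.succ →
      C a b = companionEntry (π i).natDegree (π i)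
        ((a : ℕ) - off i.castSucc) ((b : ℕ) - off i.castSucc)) ∧
    (∀ a b : Fin n,
      (∀ i : Fin s, ¬(off i.castSucc ≤ (a : ℕ) ∧ (a : ℕ) < off i.succ ∧
        off i.castSucc ≤ (b : ℕ) ∧ (b : ℕ) < off i.succ)) → C a b = 0)

section ActAux
variable {m n : ℕ}

/-- The convolution product on `Lm m`, spelled with a pinned instance. -/
noncomputable def cmul (α β : Lm m) : Lm m :=
  @HMul.hMul _ _ _ (@instHMul _ AddMonoidAlgebra.instMul) α β

/-- The matrix product over `Lm m`, spelled with pinned instances. -/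
noncomputable def cmulM (A B : Matrix (Fin n) (Fin n) (Lm m)) : Matrix (Fin n) (Fin n) (Lm m) :=
  fun a b => ∑ x, cmul (A a x) (B x b)

/-- scalar action of a Laurent polynomial on a two-sided sequence -/
noncomputable def act (α : Lm m) (c : ℤ → ZMod m) : ℤ → ZMod m :=
  fun i => Finsupp.sum α.coeff fun k v => v * c (i - k)

lemma act_addL (α β : Lm m) (c : ℤ → ZMod m) (i : ℤ) :
    act (α + β) c i = act α c i + act β c i :=
  by unfold act; rw [AddMonoidAlgebra.coeff_add]; exact Finsupp.sum_add_index' (by simp) (by intros; ring)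

lemma act_single (k : ℤ) (v : ZMod m) (c : ℤ → ZMod m) (i : ℤ) :
    act (AddMonoidAlgebra.single k v) c i = v * c (i - k) := by
  unfold act; rw [AddMonoidAlgebra.coeff_single]; exact Finsupp.sum_single_index (by simp)

lemma act_mul (α β : Lm m) (c : ℤ → ZMod m) (i : ℤ) :
    act (cmul α β) c i = act α (act β c) i := by
  simp only [act]
  rw [show (cmul α β).coeff = α.coeff.sum fun k1 v1 => β.coeff.sum fun k2 v2 => Finsupp.single (k1 + k2) (v1 * v2)
    by rw [cmul, AddMonoidAlgebra.mul_def]; simp only [Finsupp.sum, AddMonoidAlgebra.coeff_sum, AddMonoidAlgebra.coeff_single]]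
  rw [Finsupp.sum_sum_index (fun _ => by simp) (fun _ _ _ => by rw [add_mul])]
  refine Finsupp.sum_congr fun k1 _ => ?_
  rw [Finsupp.sum_sum_index (fun _ => by simp) (fun _ _ _ => by rw [add_mul])]
  rw [Finsupp.mul_sum]
  refine Finsupp.sum_congr fun k2 _ => ?_
  rw [Finsupp.sum_single_index (by simp)]
  rw [mul_assoc, sub_sub]

lemma act_sumc {ι : Type*} (s : Finset ι) (α : Lm m) (f : ι → ℤ → ZMod m) (i : ℤ) :
    act α (fun j => ∑ b ∈ s, f b j) i = ∑ b ∈ s, act α (f b) i := by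
  simp only [act, Finsupp.sum, Finset.mul_sum]
  rw [Finset.sum_comm]

lemma act_sumL {ι : Type*} (s : Finset ι) (g : ι → Lm m) (c : ℤ → ZMod m) (i : ℤ) :
    act (∑ x ∈ s, g x) c i = ∑ x ∈ s, act (g x) c i := by
  classical
  induction s using Finset.induction with
  | empty => simp [act]
  | insert _ _ ha ih => rw [Finset.sum_insert ha, Finset.sum_insert ha, act_addL, ih]

lemma lcaFun_apply (A : Matrix (Fin n) (Fin n) (Lm m)) (c : ℤ → Fin n → ZMod m) (i : ℤ)
    (a : Fin n) : lcaFun A c i a = ∑ b, act (A a b) (fun j => c j b) i := rfl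

lemma lcaFun_cmulM (A B : Matrix (Fin n) (Fin n) (Lm m)) (c : ℤ → Fin n → ZMod m) :
    lcaFun (cmulM A B) c = lcaFun A (lcaFun B c) := by
  funext i a
  rw [lcaFun_apply, lcaFun_apply]
  calc ∑ b, act (cmulM A B a b) (fun j => c j b) i
      = ∑ b, ∑ x, act (A a x) (act (B x b) (fun j => c j b)) i := by
        refine Finset.sum_congr rfl fun b _ => ?_
        rw [show cmulM A B a b = ∑ x, cmul (A a x) (B x b) from rfl, act_sumL]
        exact Finset.sum_congr rfl fun x _ => act_mul ..
    _ = ∑ x, ∑ b, act (A a x) (act (B x b) (fun j => c j b)) i := Finset.sum_comm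
    _ = ∑ x, act (A a x) (fun j => lcaFun B c j x) i := by
        refine Finset.sum_congr rfl fun x _ => ?_
        rw [show (fun j => lcaFun B c j x)
          = fun j => ∑ b, act (B x b) (fun j' => c j' b) j from rfl, act_sumc]

lemma pow_succ_cmulM (A : Matrix (Fin n) (Fin n) (Lm m)) (ℓ : ℕ) :
    A ^ (ℓ + 1) = cmulM A (A ^ ℓ) := by
  rw [pow_succ']
  ext a b
  rw [Matrix.mul_apply]
  rfl

lemma lcaFun_one (c : ℤ → Fin n → ZMod m) :
    lcaFun (1 : Matrix (Fin n) (Fin n) (Lm m)) c = c := by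
  funext i a
  rw [lcaFun_apply, Finset.sum_eq_single a]
  · rw [Matrix.one_apply_eq]
    rw [show (1 : Lm m) = AddMonoidAlgebra.single 0 1 from AddMonoidAlgebra.one_def]
    rw [act_single]
    simp
  · intro b _ hb
    rw [Matrix.one_apply_ne' hb]
    simp [act]
  · intro h; exact absurd (Finset.mem_univ a) h

lemma lcaFun_sub (A : Matrix (Fin n) (Fin n) (Lm m)) (c d : ℤ → Fin n → ZMod m) (i : ℤ)
    (a : Fin n) : lcaFun A (c - d) i a = lcaFun A c i a - lcaFun A d i a := by
  simp only [lcaFun, Finsupp.sum, Pi.sub_apply, mul_sub, Finset.sum_sub_distrib]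

lemma lcaFun_add (A : Matrix (Fin n) (Fin n) (Lm m)) (c d : ℤ → Fin n → ZMod m) (i : ℤ)
    (a : Fin n) : lcaFun A (c + d) i a = lcaFun A c i a + lcaFun A d i a := by
  simp only [lcaFun, Finsupp.sum, Pi.add_apply, mul_add, Finset.sum_add_distrib]

lemma lcaFun_zero (A : Matrix (Fin n) (Fin n) (Lm m)) :
    lcaFun A (0 : ℤ → Fin n → ZMod m) = 0 := by
  funext i a
  simp [lcaFun]

lemma lcaFun_shift (A : Matrix (Fin n) (Fin n) (Lm m)) (c : ℤ → Fin n → ZMod m) (t : ℤ) :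
    lcaFun A (fun j => c (j + t)) = fun i => lcaFun A c (i + t) := by
  funext i a
  simp only [lcaFun]
  refine Finset.sum_congr rfl fun b _ => ?_
  refine Finsupp.sum_congr fun k _ => ?_
  rw [show i - k + t = i + t - k by ring]

/-- radius of the matrix -/
noncomputable def rad (A : Matrix (Fin n) (Fin n) (Lm m)) : ℕ :=
  Finset.univ.sup fun p : Fin n × Fin n => (A p.1 p.2).coeff.support.sup fun k => k.natAbs

lemma rad_spec (A : Matrix (Fin n) (Fin n) (Lm m)) (a b : Fin n) (k : ℤ)
    (hk : k ∈ (A a b).coeff.support) : k.natAbs ≤ rad A :=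
  le_trans (Finset.le_sup hk) (Finset.le_sup (f := fun p : Fin n × Fin n =>
    (A p.1 p.2).coeff.support.sup fun k => k.natAbs) (Finset.mem_univ (a, b)))

lemma lcaFun_leftstar (A : Matrix (Fin n) (Fin n) (Lm m)) (c : ℤ → Fin n → ZMod m) (d : ℤ)
    (hc : ∀ j : ℤ, d < j → c j = 0) :
    ∀ i : ℤ, d + (rad A : ℤ) < i → lcaFun A c i = 0 := by
  intro i hi
  funext a
  rw [lcaFun_apply]
  refine Finset.sum_eq_zero fun b _ => ?_
  unfold act
  rw [Finsupp.sum]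
  refine Finset.sum_eq_zero fun k hk => ?_
  have h1 := rad_spec A a b k hk
  have h2 : c (i - k) = 0 := hc _ (by omega)
  rw [show (fun j => c j b) (i - k) = c (i - k) b from rfl, h2]
  simp

lemma lcaFun_rightstar (A : Matrix (Fin n) (Fin n) (Lm m)) (c : ℤ → Fin n → ZMod m) (d : ℤ)
    (hc : ∀ j : ℤ, j < d → c j = 0) :
    ∀ i : ℤ, i < d - (rad A : ℤ) → lcaFun A c i = 0 := by
  intro i hi
  funext a
  rw [lcaFun_apply]
  refine Finset.sum_eq_zero fun b _ => ?_
  unfold act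
  rw [Finsupp.sum]
  refine Finset.sum_eq_zero fun k hk => ?_
  have h1 := rad_spec A a b k hk
  have h2 : c (i - k) = 0 := hc _ (by omega)
  rw [show (fun j => c j b) (i - k) = c (i - k) b from rfl, h2]
  simp

lemma tdist_le {S : Type*} (x y : ℤ → S) (M : ℕ)
    (h : ∀ j : ℤ, j.natAbs ≤ M → x j = y j) :
    tdist x y ≤ (2 : ℝ) ^ (-(M : ℤ) - 1) := by
  unfold tdist
  split_ifs with hxy
  · positivity
  · obtain ⟨j, hj⟩ : ∃ j : ℤ, x j ≠ y j := by
      by_contra hco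
      push_neg at hco
      exact hxy (funext hco)
    have hmem : j.natAbs ∈ {k : ℕ | ∃ j : ℤ, j.natAbs = k ∧ x j ≠ y j} := ⟨j, rfl, hj⟩
    have hlb : M + 1 ≤ sInf {k : ℕ | ∃ j : ℤ, j.natAbs = k ∧ x j ≠ y j} := by
      refine le_csInf ⟨_, hmem⟩ ?_
      rintro b ⟨j', rfl, hj'⟩
      by_contra hlt
      exact hj' (h j' (by omega))
    exact zpow_le_zpow_right₀ one_le_two (by omega)

lemma tdist_window {S : Type*} (x y : ℤ → S) (M : ℕ)
    (h : tdist x y < (2 : ℝ) ^ (-(M : ℤ))) (j : ℤ) (hj : j.natAbs ≤ M) : x j = y j := by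
  by_contra hne
  have hxy : x ≠ y := fun he => hne (congrFun he j)
  unfold tdist at h
  rw [if_neg hxy] at h
  have h1 : sInf {k : ℕ | ∃ j : ℤ, j.natAbs = k ∧ x j ≠ y j} ≤ j.natAbs :=
    Nat.sInf_le ⟨j, rfl, hne⟩
  have h2 : (2 : ℝ) ^ (-(M : ℤ))
      ≤ (2 : ℝ) ^ (-((sInf {k : ℕ | ∃ j : ℤ, j.natAbs = k ∧ x j ≠ y j} : ℕ) : ℤ)) :=
    zpow_le_zpow_right₀ one_le_two (by omega)
  linarith

end ActAux

/-- an LCA `F` over `(ℤ/mℤ)ⁿ` with associated matrix `A` is NOT positively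
expansive iff there is an integer `s > 0` such that either some nonzero
`υ ∈ Left(𝕊ⁿ_m, 0)` has `Aˡυ ∈ Left*(𝕊ⁿ_m, s)` for all `ℓ > 0`, or some nonzero
`υ ∈ Right(𝕊ⁿ_m, 0)` has `Aˡυ ∈ Right*(𝕊ⁿ_m, -s)` for all `ℓ > 0`. -/
theorem stmt1 (m n : ℕ) (hm : 1 < m) (hn : 1 < n)
    (F : (ℤ → Fin n → ZMod m) → (ℤ → Fin n → ZMod m))
    (A : Matrix (Fin n) (Fin n) (Lm m)) (hF : F = lcaFun A) :
    ¬ PosExpansive F ↔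
      ∃ s : ℤ, 0 < s ∧
        ((∃ υ : ℤ → Fin n → ZMod m, υ ∈ SLeft (0 : ℤ) ∧ υ ≠ 0 ∧
            ∀ ℓ : ℕ, 0 < ℓ → lcaFun (A ^ ℓ) υ ∈ SLeftStar s) ∨
         (∃ υ : ℤ → Fin n → ZMod m, υ ∈ SRight (0 : ℤ) ∧ υ ≠ 0 ∧
            ∀ ℓ : ℕ, 0 < ℓ → lcaFun (A ^ ℓ) υ ∈ SRightStar (-s))) := by
  have hIter : ∀ (ℓ : ℕ) (c : ℤ → Fin n → ZMod m), F^[ℓ] c = lcaFun (A ^ ℓ) c := by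
    intro ℓ
    induction ℓ with
    | zero => intro c; rw [Function.iterate_zero_apply, pow_zero, lcaFun_one]
    | succ ℓ ih =>
      intro c
      rw [Function.iterate_succ_apply', ih, hF, pow_succ_cmulM, lcaFun_cmulM]
  constructor
  · -- forward direction
    intro hnot
    unfold PosExpansive at hnot
    push_neg at hnot
    set k : ℕ := rad A + 1 with hk
    obtain ⟨c, c', hne, hall⟩ := hnot ((2 : ℝ) ^ (-(k : ℤ))) (by positivity)
    set δ : ℤ → Fin n → ZMod m := c - c' with hδdef
    have hδne : δ ≠ 0 := sub_ne_zero.mpr hne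
    have hD : ∀ (ℓ : ℕ) (j : ℤ), j.natAbs ≤ k → lcaFun (A ^ ℓ) δ j = 0 := by
      intro ℓ j hj
      have h1 : F^[ℓ] c j = F^[ℓ] c' j := tdist_window _ _ k (hall ℓ) j hj
      have h2 : lcaFun (A ^ ℓ) δ j = lcaFun (A ^ ℓ) c j - lcaFun (A ^ ℓ) c' j := by
        funext a
        rw [hδdef]
        exact lcaFun_sub _ _ _ _ _
      rw [h2, ← hIter ℓ c, ← hIter ℓ c', h1, sub_self]
    set lam : ℤ → Fin n → ZMod m := fun j => if j < -(k : ℤ) then δ j else 0 with hlam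
    set rho : ℤ → Fin n → ZMod m := fun j => if (k : ℤ) < j then δ j else 0 with hrho
    have hδ0 : ∀ j : ℤ, j.natAbs ≤ k → δ j = 0 := by
      intro j hj
      have := hD 0 j hj
      rwa [pow_zero, lcaFun_one] at this
    have hsplit : δ = lam + rho := by
      funext j a
      by_cases h1 : j < -(k : ℤ)
      · have h2 : ¬((k : ℤ) < j) := by omega
        simp [hlam, hrho, h1, h2]
      · by_cases h2 : (k : ℤ) < j
        · simp [hlam, hrho, h1, h2]
        · have h3 : δ j = 0 := hδ0 j (by omega)
          simp [hlam, hrho, h1, h2, h3]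
    have hlam0 : ∀ j : ℤ, -(k : ℤ) - 1 < j → lam j = 0 := by
      intro j hj
      have h1 : ¬(j < -(k : ℤ)) := by omega
      simp [hlam, h1]
    have hrho0 : ∀ j : ℤ, j < (k : ℤ) + 1 → rho j = 0 := by
      intro j hj
      have h1 : ¬((k : ℤ) < j) := by omega
      simp [hrho, h1]
    have hmain : ∀ ℓ : ℕ, (∀ j : ℤ, -(k : ℤ) - 1 < j → lcaFun (A ^ ℓ) lam j = 0) ∧
        (∀ j : ℤ, j < (k : ℤ) + 1 → lcaFun (A ^ ℓ) rho j = 0) := by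
      intro ℓ
      induction ℓ with
      | zero =>
        constructor
        · intro j hj; rw [pow_zero, lcaFun_one]; exact hlam0 j hj
        · intro j hj; rw [pow_zero, lcaFun_one]; exact hrho0 j hj
      | succ ℓ ih =>
        obtain ⟨hL, hR⟩ := ih
        have eL : lcaFun (A ^ (ℓ + 1)) lam = lcaFun A (lcaFun (A ^ ℓ) lam) := by
          rw [pow_succ_cmulM, lcaFun_cmulM]
        have eR : lcaFun (A ^ (ℓ + 1)) rho = lcaFun A (lcaFun (A ^ ℓ) rho) := by
          rw [pow_succ_cmulM, lcaFun_cmulM]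
        have hL' : ∀ i : ℤ, -(k : ℤ) - 1 + (rad A : ℤ) < i →
            lcaFun A (lcaFun (A ^ ℓ) lam) i = 0 := lcaFun_leftstar A _ _ hL
        have hR' : ∀ i : ℤ, i < ((k : ℤ) + 1) - (rad A : ℤ) →
            lcaFun A (lcaFun (A ^ ℓ) rho) i = 0 := lcaFun_rightstar A _ _ hR
        have hsum : ∀ (j : ℤ) (a : Fin n), lcaFun (A ^ (ℓ + 1)) lam j a
            + lcaFun (A ^ (ℓ + 1)) rho j a = lcaFun (A ^ (ℓ + 1)) δ j a := by
          intro j a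
          rw [hsplit]
          exact (lcaFun_add _ _ _ _ _).symm
        constructor
        · intro j hj
          by_cases hc : -(k : ℤ) - 1 + (rad A : ℤ) < j
          · rw [eL]; exact hL' j hc
          · have h0 : lcaFun (A ^ (ℓ + 1)) δ j = 0 := hD (ℓ + 1) j (by omega)
            have h2 : lcaFun (A ^ (ℓ + 1)) rho j = 0 := by
              rw [eR]; exact hR' j (by omega)
            funext a
            have h3 := hsum j a
            rw [h2, h0] at h3
            simpa using h3
        · intro j hj
          by_cases hc : j < ((k : ℤ) + 1) - (rad A : ℤ)
          · rw [eR]; exact hR' j hc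
          · have h0 : lcaFun (A ^ (ℓ + 1)) δ j = 0 := hD (ℓ + 1) j (by omega)
            have h2 : lcaFun (A ^ (ℓ + 1)) lam j = 0 := by
              rw [eL]; exact hL' j (by omega)
            funext a
            have h3 := hsum j a
            rw [h2, h0] at h3
            simpa using h3
    have hcase : (∃ j, lam j ≠ 0) ∨ (∃ j, rho j ≠ 0) := by
      by_contra hco
      push_neg at hco
      apply hδne
      rw [hsplit]
      funext j
      simp [hco.1 j, hco.2 j]
    rcases hcase with ⟨j0, hj0⟩ | ⟨j0, hj0⟩
    · -- left case
      have hbdd : ∀ z : ℤ, lam z ≠ 0 → z ≤ -(k : ℤ) - 1 := by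
        intro z hz
        by_contra hco
        exact hz (hlam0 z (by omega))
      obtain ⟨t, ht1, ht2⟩ := Int.exists_greatest_of_bdd ⟨-(k : ℤ) - 1, hbdd⟩ ⟨j0, hj0⟩
      have htk : t ≤ -(k : ℤ) - 1 := hbdd t ht1
      refine ⟨-(k : ℤ) - t, by omega, Or.inl ⟨fun j => lam (j + t), ?_, ?_, ?_⟩⟩
      · refine ⟨fun j hj => ?_, ?_⟩
        · by_contra hco
          have := ht2 _ hco
          omega
        · simpa using ht1
      · intro hz
        apply ht1
        have := congrFun hz 0
        simpa using this
      · intro ℓ _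
        intro j hj
        rw [lcaFun_shift]
        exact (hmain ℓ).1 (j + t) (by omega)
    · -- right case
      have hbdd : ∀ z : ℤ, rho z ≠ 0 → (k : ℤ) + 1 ≤ z := by
        intro z hz
        by_contra hco
        exact hz (hrho0 z (by omega))
      obtain ⟨t, ht1, ht2⟩ := Int.exists_least_of_bdd ⟨(k : ℤ) + 1, hbdd⟩ ⟨j0, hj0⟩
      have htk : (k : ℤ) + 1 ≤ t := hbdd t ht1
      refine ⟨t - (k : ℤ), by omega, Or.inr ⟨fun j => rho (j + t), ?_, ?_, ?_⟩⟩
      · refine ⟨fun j hj => ?_, ?_⟩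
        · by_contra hco
          have := ht2 _ hco
          omega
        · simpa using ht1
      · intro hz
        apply ht1
        have := congrFun hz 0
        simpa using this
      · intro ℓ _
        intro j hj
        rw [lcaFun_shift]
        exact (hmain ℓ).2 (j + t) (by omega)
  · -- backward direction
    rintro ⟨s, hs, hcase⟩ ⟨ε, hε, hexp⟩
    obtain ⟨M, hM⟩ := exists_pow_lt_of_lt_one hε (by norm_num : (1 / 2 : ℝ) < 1)
    have hM2 : (2 : ℝ) ^ (-(M : ℤ) - 1) < ε := by
      have h1 : (2 : ℝ) ^ (-(M : ℤ) - 1) ≤ (2 : ℝ) ^ (-(M : ℤ)) :=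
        zpow_le_zpow_right₀ one_le_two (by omega)
      have h2 : (2 : ℝ) ^ (-(M : ℤ)) = (1 / 2 : ℝ) ^ M := by
        rw [zpow_neg, zpow_natCast, one_div, inv_pow]
      linarith
    rcases hcase with ⟨υ, hυmem, hυne, horb⟩ | ⟨υ, hυmem, hυne, horb⟩
    · obtain ⟨hυ1, hυ0⟩ := hυmem
      have horb' : ∀ (ℓ : ℕ) (j : ℤ), s < j → lcaFun (A ^ ℓ) υ j = 0 := by
        intro ℓ j hj
        cases ℓ with
        | zero => rw [pow_zero, lcaFun_one]; exact hυ1 j (by omega)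
        | succ ℓ => exact horb (ℓ + 1) (Nat.succ_pos ℓ) j hj
      set t : ℤ := s + (M : ℤ) + 1 with htdef
      set c : ℤ → Fin n → ZMod m := fun j => υ (j + t) with hcdef
      have hcne : c ≠ 0 := by
        intro h
        apply hυ0
        have := congrFun h (-t)
        simpa [hcdef] using this
      obtain ⟨ℓ, hℓ⟩ := hexp c 0 hcne
      have hvan : ∀ j : ℤ, j.natAbs ≤ M →
          F^[ℓ] c j = F^[ℓ] (0 : ℤ → Fin n → ZMod m) j := by
        intro j hj
        rw [hIter, hIter, lcaFun_zero, hcdef, lcaFun_shift]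
        have h5 : lcaFun (A ^ ℓ) υ (j + t) = 0 := horb' ℓ (j + t) (by omega)
        simpa using h5
      have hle := tdist_le (F^[ℓ] c) (F^[ℓ] 0) M hvan
      linarith
    · obtain ⟨hυ1, hυ0⟩ := hυmem
      have horb' : ∀ (ℓ : ℕ) (j : ℤ), j < -s → lcaFun (A ^ ℓ) υ j = 0 := by
        intro ℓ j hj
        cases ℓ with
        | zero => rw [pow_zero, lcaFun_one]; exact hυ1 j (by omega)
        | succ ℓ => exact horb (ℓ + 1) (Nat.succ_pos ℓ) j hj
      set t : ℤ := -(s + (M : ℤ) + 1) with htdef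
      set c : ℤ → Fin n → ZMod m := fun j => υ (j + t) with hcdef
      have hcne : c ≠ 0 := by
        intro h
        apply hυ0
        have := congrFun h (s + (M : ℤ) + 1)
        simp only [hcdef, Pi.zero_apply] at this
        rw [show s + (M : ℤ) + 1 + t = 0 by omega] at this
        exact this
      obtain ⟨ℓ, hℓ⟩ := hexp c 0 hcne
      have hvan : ∀ j : ℤ, j.natAbs ≤ M →
          F^[ℓ] c j = F^[ℓ] (0 : ℤ → Fin n → ZMod m) j := by
        intro j hj
        rw [hIter, hIter, lcaFun_zero, hcdef, lcaFun_shift]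
        have h5 : lcaFun (A ^ ℓ) υ (j + t) = 0 := horb' ℓ (j + t) (by omega)
        simpa using h5
      have hle := tdist_le (F^[ℓ] c) (F^[ℓ] 0) M hvan
      linarith
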